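/- arXiv:1812.07320 — 2 statements merged into one kernel-verified Lean document; each statement's English description precedes it below -/
import Mathlib

section
/- Fix a finite interval [a,b] with a < b. There exists a constant C > 0 such that for every twice continuously differentiable function u : [a,b] → ℂ, every λ ∈ ℂ, and every point x₀ ∈ [a,b], |λ|^{1/4} |u(x₀)| ≤ C [ (‖u‖²_{L²(a,b)} + ‖u'‖²_{L²(a,b)} + ‖u''‖²_{L²(a,b)})^{1/2} + |λ| ‖u‖_{L²(a,b)} ]. -/
open MeasureTheory intervalIntegral RealInnerProductSpace

set_option maxHeartbeats 1000000 in
/-- Parameter-dependent trace estimate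
`|λ|^{1/4} |u(x₀)| ≤ C (‖u‖_{W²(a,b)} + |λ| ‖u‖_{L²(a,b)})` for every `C²`
function `u` on `[a,b]`, every `λ ∈ ℂ` and every `x₀ ∈ [a,b]`. -/
theorem parameter_trace_estimate (a b : ℝ) (hab : a < b) :
    ∃ C > (0 : ℝ), ∀ u : ℝ → ℂ, ContDiff ℝ 2 u → ∀ l : ℂ, ∀ x₀ ∈ Set.Icc a b,
      ‖l‖ ^ ((1 : ℝ) / 4) * ‖u x₀‖
        ≤ C * ((((∫ x in a..b, ‖u x‖ ^ 2) + (∫ x in a..b, ‖deriv u x‖ ^ 2)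
              + (∫ x in a..b, ‖deriv (deriv u) x‖ ^ 2)) ^ ((1 : ℝ) / 2))
            + ‖l‖ * ((∫ x in a..b, ‖u x‖ ^ 2) ^ ((1 : ℝ) / 2))) := by
  have hba : (0:ℝ) < b - a := by linarith
  set d : ℝ := (b - a)⁻¹ with hd
  have hd0 : 0 < d := inv_pos.mpr hba
  refine ⟨Real.sqrt (1 + d), Real.sqrt_pos.mpr (by linarith), ?_⟩
  intro u hu l x₀ hx₀
  -- continuity and differentiability facts
  have hu1 : Differentiable ℝ u := hu.differentiable (by norm_num)
  have hcu : Continuous u := hu.continuous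
  have hcu' : Continuous (deriv u) := hu.continuous_deriv (by norm_num)
  have hu2 : ContDiff ℝ 1 (deriv u) :=
    (contDiff_succ_iff_deriv.mp (by rw [one_add_one_eq_two]; exact hu)).2.2
  have hcu'' : Continuous (deriv (deriv u)) := hu2.continuous_deriv le_rfl
  set M : ℝ := ∫ x in a..b, ‖u x‖ ^ 2 with hMdef
  set N : ℝ := ∫ x in a..b, ‖deriv u x‖ ^ 2 with hNdef
  set P : ℝ := ∫ x in a..b, ‖deriv (deriv u) x‖ ^ 2 with hPdef
  have hMint : IntervalIntegrable (fun x => ‖u x‖ ^ 2) volume a b :=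
    ((hcu.norm.pow 2)).intervalIntegrable a b
  have hNint : IntervalIntegrable (fun x => ‖deriv u x‖ ^ 2) volume a b :=
    ((hcu'.norm.pow 2)).intervalIntegrable a b
  have hM0 : 0 ≤ M := integral_nonneg hab.le (fun x _ => by positivity)
  have hN0 : 0 ≤ N := integral_nonneg hab.le (fun x _ => by positivity)
  have hP0 : 0 ≤ P := integral_nonneg hab.le (fun x _ => by positivity)
  set T : ℝ := ‖l‖ with hT
  have hT0 : 0 ≤ T := norm_nonneg l
  set W : ℝ := Real.sqrt (M + N + P) with hWdef
  set L : ℝ := Real.sqrt M with hLdef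
  have hW0 : 0 ≤ W := Real.sqrt_nonneg _
  have hL0 : 0 ≤ L := Real.sqrt_nonneg _
  have hWsq : W ^ 2 = M + N + P := Real.sq_sqrt (by linarith)
  have hLsq : L ^ 2 = M := Real.sq_sqrt hM0
  have hLW : L ≤ W := Real.sqrt_le_sqrt (by linarith)
  -- rewrite the goal in terms of sqrt
  rw [show ((M + N + P) ^ ((1:ℝ)/2)) = W by
        rw [hWdef, Real.sqrt_eq_rpow],
      show (M ^ ((1:ℝ)/2)) = L by rw [hLdef, Real.sqrt_eq_rpow]]
  by_cases hl : l = 0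
  · have hTz : T = 0 := by rw [hT, hl, norm_zero]
    rw [hTz, Real.zero_rpow (by norm_num), zero_mul, zero_mul, add_zero]
    exact mul_nonneg (Real.sqrt_nonneg _) hW0
  -- main case
  have hTpos : 0 < T := norm_pos_iff.mpr hl
  set s : ℝ := Real.sqrt T with hsdef
  have hs0 : 0 < s := Real.sqrt_pos.mpr hTpos
  have hs2 : s ^ 2 = T := Real.sq_sqrt hT0
  -- the function g = ‖u‖² and its derivative D
  set g : ℝ → ℝ := fun x => ‖u x‖ ^ 2 with hgdef
  set D : ℝ → ℝ := fun x => ⟪u x, deriv u x⟫ + ⟪deriv u x, u x⟫ with hDdef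
  have hcg : Continuous g := hcu.norm.pow 2
  have hcD : Continuous D := (hcu.inner hcu').add (hcu'.inner hcu)
  have hgD : ∀ x, HasDerivAt g (D x) x := by
    intro x
    have h := (hu1 x).hasDerivAt.inner ℝ (hu1 x).hasDerivAt
    have heq : (fun t => (⟪u t, u t⟫ : ℝ)) = g := by
      funext t; exact real_inner_self_eq_norm_sq (u t)
    rw [heq] at h
    exact h
  have hDbound : ∀ x, |D x| ≤ 2 * (‖u x‖ * ‖deriv u x‖) := by
    intro x
    calc |D x| ≤ |(⟪u x, deriv u x⟫ : ℝ)| + |(⟪deriv u x, u x⟫ : ℝ)| := abs_add_le _ _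
      _ ≤ ‖u x‖ * ‖deriv u x‖ + ‖deriv u x‖ * ‖u x‖ :=
          add_le_add (abs_real_inner_le_norm _ _) (abs_real_inner_le_norm _ _)
      _ = 2 * (‖u x‖ * ‖deriv u x‖) := by ring
  -- choose a point where g is minimal
  obtain ⟨y, hy, hymin⟩ :=
    isCompact_Icc.exists_isMinOn (Set.nonempty_Icc.mpr hab.le) hcg.continuousOn
  have hgy : g y ≤ d * M := by
    have h1 : (∫ _ in a..b, g y) ≤ ∫ x in a..b, g x :=
      integral_mono_on hab.le intervalIntegrable_const hMint (fun x hx => hymin hx)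
    rw [intervalIntegral.integral_const, smul_eq_mul] at h1
    have : (b - a) * g y ≤ M := h1
    rw [hd, inv_mul_eq_div, le_div_iff₀ hba]
    linarith
  -- fundamental theorem of calculus
  have hftc : g x₀ - g y = ∫ t in y..x₀, D t :=
    (integral_eq_sub_of_hasDerivAt (fun t _ => hgD t)
      (hcD.intervalIntegrable _ _)).symm
  -- bound the integral of |D| over [a,b]
  have habs : |∫ t in y..x₀, D t| ≤ ∫ t in a..b, |D t| := by
    have h1 : |∫ t in y..x₀, D t| ≤ abs (∫ t in y..x₀, |D t|) := by
      simpa [Real.norm_eq_abs] using intervalIntegral.norm_integral_le_abs_integral_norm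
        (f := D) (a := y) (b := x₀) (μ := volume)
    have h2 : abs (∫ t in y..x₀, |D t|) ≤ abs (∫ t in a..b, |D t|) := by
      apply intervalIntegral.abs_integral_mono_interval
      · rw [Set.uIoc, Set.uIoc]
        apply Set.Ioc_subset_Ioc
        · simp [le_min_iff, hy.1, hx₀.1]
        · simp [max_le_iff, hy.2, hx₀.2]
      · filter_upwards with t using abs_nonneg _
      · exact (hcD.abs).intervalIntegrable a b
    have h3 : abs (∫ t in a..b, |D t|) = ∫ t in a..b, |D t| :=
      abs_of_nonneg (integral_nonneg hab.le (fun t _ => abs_nonneg _))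
    linarith
  -- pointwise Young inequality and integration
  have hDint : (∫ t in a..b, |D t|) ≤ s * M + s⁻¹ * N := by
    have hpt : ∀ t ∈ Set.Icc a b, |D t| ≤ s * ‖u t‖ ^ 2 + s⁻¹ * ‖deriv u t‖ ^ 2 := by
      intro t _
      have h1 := hDbound t
      have h2 : 0 ≤ ‖u t‖ := norm_nonneg _
      have h3 : 0 ≤ ‖deriv u t‖ := norm_nonneg _
      nlinarith [sq_nonneg (s * ‖u t‖ - ‖deriv u t‖), mul_inv_cancel₀ hs0.ne',
        mul_pos hs0 (inv_pos.mpr hs0), inv_pos.mpr hs0]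
    have h4 : (∫ t in a..b, |D t|)
        ≤ ∫ t in a..b, (s * ‖u t‖ ^ 2 + s⁻¹ * ‖deriv u t‖ ^ 2) := by
      apply integral_mono_on hab.le ((hcD.abs).intervalIntegrable a b)
      · exact ((continuous_const.mul (hcu.norm.pow 2)).add
          (continuous_const.mul (hcu'.norm.pow 2))).intervalIntegrable a b
      · exact hpt
    have h5 : (∫ t in a..b, (s * ‖u t‖ ^ 2 + s⁻¹ * ‖deriv u t‖ ^ 2))
        = s * M + s⁻¹ * N := by
      rw [integral_add ((hMint.const_mul s)) ((hNint.const_mul s⁻¹)),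
        intervalIntegral.integral_const_mul, intervalIntegral.integral_const_mul]
    linarith
  -- combine: g x₀ ≤ d M + s M + s⁻¹ N
  have hgx : g x₀ ≤ d * M + s * M + s⁻¹ * N := by
    have := abs_sub_abs_le_abs_sub (g x₀) (g y)
    have h1 : g x₀ - g y ≤ s * M + s⁻¹ * N := by
      rw [hftc]; exact le_trans (le_abs_self _) (le_trans habs hDint)
    linarith
  -- s ≤ 1 + T
  have hsle : s ≤ 1 + T := by nlinarith [sq_nonneg (s - 1)]
  -- key inequality for squares
  have hmul : s * g x₀ ≤ s * (d * M + s * M + s⁻¹ * N) :=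
    mul_le_mul_of_nonneg_left hgx hs0.le
  have hss : s * s⁻¹ = 1 := mul_inv_cancel₀ hs0.ne'
  have e1 : s * (d * M + s * M + s⁻¹ * N) = d * (s * M) + s ^ 2 * M + (s * s⁻¹) * N := by
    ring
  have e2 : s * g x₀ ≤ d * ((1 + T) * M) + T * M + N := by
    have h6 : s * M ≤ (1 + T) * M := mul_le_mul_of_nonneg_right hsle hM0
    have h7 : d * (s * M) ≤ d * ((1 + T) * M) := mul_le_mul_of_nonneg_left h6 hd0.le
    rw [e1, hss, hs2] at hmul
    linarith
  have h8 : M ≤ L * W := by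
    calc M = L * L := by rw [← hLsq]; ring
      _ ≤ L * W := mul_le_mul_of_nonneg_left hLW hL0
  have hsq : (W + T * L) ^ 2 = (M + N + P) + 2 * (T * (L * W)) + T ^ 2 * M := by
    have h : (W + T * L) ^ 2 = W ^ 2 + 2 * (T * (L * W)) + T ^ 2 * L ^ 2 := by ring
    rw [h, hWsq, hLsq]
  have hkey : s * g x₀ ≤ (1 + d) * (W + T * L) ^ 2 := by
    rw [hsq]
    have h9 : T * M ≤ T * (L * W) := mul_le_mul_of_nonneg_left h8 hT0
    have hY0 : 0 ≤ T * M := mul_nonneg hT0 hM0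
    have hX0 : 0 ≤ T * (L * W) := le_trans hY0 h9
    have hdY : d * (T * M) ≤ d * (T * (L * W)) := mul_le_mul_of_nonneg_left h9 hd0.le
    have hdX0 : 0 ≤ d * (T * (L * W)) := mul_nonneg hd0.le hX0
    have hdN : 0 ≤ d * N := mul_nonneg hd0.le hN0
    have hdP : 0 ≤ d * P := mul_nonneg hd0.le hP0
    have hT2M : 0 ≤ T ^ 2 * M := mul_nonneg (sq_nonneg T) hM0
    have hdT2M : 0 ≤ d * (T ^ 2 * M) := mul_nonneg hd0.le hT2M
    linarith [e2, h9, hdY, hX0, hdX0, hdN, hdP, hT2M, hdT2M]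
  -- take square roots
  have h14 : T ^ ((1:ℝ)/4) = Real.sqrt (Real.sqrt T) := by
    rw [Real.sqrt_eq_rpow, Real.sqrt_eq_rpow, ← Real.rpow_mul hT0]
    norm_num
  have hgx0 : Real.sqrt (g x₀) = ‖u x₀‖ := Real.sqrt_sq (norm_nonneg _)
  have hLHS : ‖l‖ ^ ((1:ℝ)/4) * ‖u x₀‖ = Real.sqrt (s * g x₀) := by
    rw [Real.sqrt_mul hs0.le, hgx0, ← hT, h14, hsdef]
  calc ‖l‖ ^ ((1:ℝ)/4) * ‖u x₀‖ = Real.sqrt (s * g x₀) := hLHS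
    _ ≤ Real.sqrt ((1 + d) * (W + T * L) ^ 2) := Real.sqrt_le_sqrt hkey
    _ = Real.sqrt (1 + d) * (W + T * L) := by
        rw [Real.sqrt_mul (by linarith), Real.sqrt_sq (by positivity)]
end

section
/- Let p₁, p₂ be nonzero real numbers, α₀, α₁ real numbers not both zero, β₀, β₁ real numbers not both zero, and γ₀, γ₁, δ₀, δ₁ real numbers satisfying the compatibility condition p₁δ₀ + p₂γ₁ = 0 between the coefficients and the orientation of the two subintervals. Let u = (u₁,u₂) and v = (v₁,v₂) with u₁, v₁ : [−1,0] → ℂ and u₂, v₂ : [0,1] → ℂ twice continuously differentiable, and suppose both u and v satisfy: the boundary conditions α₀w₁(−1) + α₁w₁'(−1) = 0 and β₀w₂(1) + β₁w₂'(1) = 0, and the transmission conditions w₁'(0) = γ₀w₁(0) + δ₀w₂(0) and w₂'(0) = γ₁w₁(0) + δ₁w₂(0). Then p₁∫_{−1}^{0} u₁'' \overline{v₁} + p₂∫_{0}^{1} u₂'' \overline{v₂} = p₁∫_{−1}^{0} u₁ \overline{v₁''} + p₂∫_{0}^{1} u₂ \overline{v₂''}, i.e. ⟨£₀u, v⟩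 = ⟨u, £₀v⟩. -/
open MeasureTheory intervalIntegral ComplexConjugate

open MeasureTheory intervalIntegral ComplexConjugate

lemma lagrange_interval (f g : ℝ → ℂ) (hf : ContDiff ℝ 2 f) (hg : ContDiff ℝ 2 g)
    (a b : ℝ) :
    (∫ x in a..b, deriv (deriv f) x * conj (g x))
      - (∫ x in a..b, f x * conj (deriv (deriv g) x))
    = (deriv f b * conj (g b) - f b * conj (deriv g b))
      - (deriv f a * conj (g a) - f a * conj (deriv g a)) := by
  have hdf : Continuous (deriv (deriv f)) := by
    have := (hf.iterate_deriv' 0 2).continuous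
    simpa [Function.iterate_succ, Function.comp] using this
  have hdg : Continuous (deriv (deriv g)) := by
    have := (hg.iterate_deriv' 0 2).continuous
    simpa [Function.iterate_succ, Function.comp] using this
  have hdf1 : Continuous (deriv f) := by
    have := (hf.iterate_deriv' 1 1).continuous
    simpa using this
  have hdg1 : Continuous (deriv g) := by
    have := (hg.iterate_deriv' 1 1).continuous
    simpa using this
  have hc1 : Continuous fun x => deriv (deriv f) x * conj (g x) :=
    hdf.mul (continuous_star.comp hg.continuous)
  have hc2 : Continuous fun x => f x * conj (deriv (deriv g) x) :=
    hf.continuous.mul (continuous_star.comp hdg)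
  have hW : ∀ x : ℝ, HasDerivAt
      (fun x => deriv f x * conj (g x) - f x * conj (deriv g x))
      (deriv (deriv f) x * conj (g x) - f x * conj (deriv (deriv g) x)) x := by
    intro x
    have hf' : HasDerivAt f (deriv f x) x :=
      (hf.differentiable (by norm_num) x).hasDerivAt
    have hg' : HasDerivAt g (deriv g x) x :=
      (hg.differentiable (by norm_num) x).hasDerivAt
    have hf'' : HasDerivAt (deriv f) (deriv (deriv f) x) x := by
      have : Differentiable ℝ (deriv f) := by
        have := (hf.iterate_deriv' 1 1).differentiable (by norm_num)
        simpa using this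
      exact (this x).hasDerivAt
    have hg'' : HasDerivAt (deriv g) (deriv (deriv g) x) x := by
      have : Differentiable ℝ (deriv g) := by
        have := (hg.iterate_deriv' 1 1).differentiable (by norm_num)
        simpa using this
      exact (this x).hasDerivAt
    have h1 := hf''.mul hg'.star
    have h2 := hf'.mul hg''.star
    have := h1.sub h2
    convert this using 1
    case e'_9 =>
      simp only [starRingEnd_apply]
      ring
    all_goals rfl
  have key := intervalIntegral.integral_eq_sub_of_hasDerivAt
    (f := fun x => deriv f x * conj (g x) - f x * conj (deriv g x))
    (fun x _ => hW x) ((hc1.sub hc2).intervalIntegrable a b)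
  rw [intervalIntegral.integral_sub (hc1.intervalIntegrable a b)
    (hc2.intervalIntegrable a b)] at key
  exact key

lemma wronskian_bc_zero (a₀ a₁ : ℝ) (h : ¬(a₀ = 0 ∧ a₁ = 0)) (x x' y y' : ℂ)
    (hx : (a₀ : ℂ) * x + (a₁ : ℂ) * x' = 0) (hy : (a₀ : ℂ) * y + (a₁ : ℂ) * y' = 0) :
    x' * conj y - x * conj y' = 0 := by
  have hy' : (a₀ : ℂ) * conj y + (a₁ : ℂ) * conj y' = 0 := by
    have := congrArg conj hy
    simpa [map_add, map_mul, Complex.conj_ofReal] using this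
  rcases not_and_or.mp h with h0 | h1
  · have ha : (a₀ : ℂ) ≠ 0 := by exact_mod_cast h0
    have : (a₀ : ℂ) * (x' * conj y - x * conj y') = 0 := by linear_combination x' * hy' - conj y' * hx
    exact (mul_eq_zero.mp this).resolve_left ha
  · have ha : (a₁ : ℂ) ≠ 0 := by exact_mod_cast h1
    have : (a₁ : ℂ) * (x' * conj y - x * conj y') = 0 := by linear_combination conj y * hx - x * hy'
    exact (mul_eq_zero.mp this).resolve_left ha

/-- Symmetry of the transmission Sturm–Liouville expression:
if `u` and `v` both satisfy the boundary conditions at `∓1` and the transmission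
conditions at `0`, and `p₁δ₀ + p₂γ₁ = 0`, then `⟨£₀u, v⟩ = ⟨u, £₀v⟩`. -/
theorem transmission_operator_symmetric
    (p₁ p₂ α₀ α₁ β₀ β₁ γ₀ γ₁ δ₀ δ₁ : ℝ)
    (hp₁ : p₁ ≠ 0) (hp₂ : p₂ ≠ 0)
    (hα : ¬(α₀ = 0 ∧ α₁ = 0)) (hβ : ¬(β₀ = 0 ∧ β₁ = 0))
    (hcomp : p₁ * δ₀ + p₂ * γ₁ = 0)
    (u₁ u₂ v₁ v₂ : ℝ → ℂ)
    (hu₁ : ContDiff ℝ 2 u₁) (hu₂ : ContDiff ℝ 2 u₂)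
    (hv₁ : ContDiff ℝ 2 v₁) (hv₂ : ContDiff ℝ 2 v₂)
    (hubc₁ : (α₀ : ℂ) * u₁ (-1) + (α₁ : ℂ) * deriv u₁ (-1) = 0)
    (hubc₂ : (β₀ : ℂ) * u₂ 1 + (β₁ : ℂ) * deriv u₂ 1 = 0)
    (hutc₁ : deriv u₁ 0 = (γ₀ : ℂ) * u₁ 0 + (δ₀ : ℂ) * u₂ 0)
    (hutc₂ : deriv u₂ 0 = (γ₁ : ℂ) * u₁ 0 + (δ₁ : ℂ) * u₂ 0)
    (hvbc₁ : (α₀ : ℂ) * v₁ (-1) + (α₁ : ℂ) * deriv v₁ (-1) = 0)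
    (hvbc₂ : (β₀ : ℂ) * v₂ 1 + (β₁ : ℂ) * deriv v₂ 1 = 0)
    (hvtc₁ : deriv v₁ 0 = (γ₀ : ℂ) * v₁ 0 + (δ₀ : ℂ) * v₂ 0)
    (hvtc₂ : deriv v₂ 0 = (γ₁ : ℂ) * v₁ 0 + (δ₁ : ℂ) * v₂ 0) :
    (p₁ : ℂ) * (∫ x in (-1 : ℝ)..0, deriv (deriv u₁) x * conj (v₁ x))
      + (p₂ : ℂ) * (∫ x in (0 : ℝ)..1, deriv (deriv u₂) x * conj (v₂ x))
    = (p₁ : ℂ) * (∫ x in (-1 : ℝ)..0, u₁ x * conj (deriv (deriv v₁) x))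
      + (p₂ : ℂ) * (∫ x in (0 : ℝ)..1, u₂ x * conj (deriv (deriv v₂) x)) := by
  have key₁ := lagrange_interval u₁ v₁ hu₁ hv₁ (-1) 0
  have key₂ := lagrange_interval u₂ v₂ hu₂ hv₂ 0 1
  have hb₁ : deriv u₁ (-1) * conj (v₁ (-1)) - u₁ (-1) * conj (deriv v₁ (-1)) = 0 :=
    wronskian_bc_zero α₀ α₁ hα _ _ _ _ hubc₁ hvbc₁
  have hb₂ : deriv u₂ 1 * conj (v₂ 1) - u₂ 1 * conj (deriv v₂ 1) = 0 :=
    wronskian_bc_zero β₀ β₁ hβ _ _ _ _ hubc₂ hvbc₂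
  have hcv₁ : conj (deriv v₁ 0) = (γ₀ : ℂ) * conj (v₁ 0) + (δ₀ : ℂ) * conj (v₂ 0) := by
    have := congrArg conj hvtc₁
    simpa [map_add, map_mul, Complex.conj_ofReal] using this
  have hcv₂ : conj (deriv v₂ 0) = (γ₁ : ℂ) * conj (v₁ 0) + (δ₁ : ℂ) * conj (v₂ 0) := by
    have := congrArg conj hvtc₂
    simpa [map_add, map_mul, Complex.conj_ofReal] using this
  have hcompC : (p₁ : ℂ) * (δ₀ : ℂ) + (p₂ : ℂ) * (γ₁ : ℂ) = 0 := by exact_mod_cast hcomp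
  have hmid : (p₁ : ℂ) * (deriv u₁ 0 * conj (v₁ 0) - u₁ 0 * conj (deriv v₁ 0))
      - (p₂ : ℂ) * (deriv u₂ 0 * conj (v₂ 0) - u₂ 0 * conj (deriv v₂ 0)) = 0 := by
    rw [hutc₁, hutc₂, hcv₁, hcv₂]
    linear_combination (u₂ 0 * conj (v₁ 0) - u₁ 0 * conj (v₂ 0)) * hcompC
  linear_combination (p₁ : ℂ) * key₁ + (p₂ : ℂ) * key₂ - (p₁ : ℂ) * hb₁ + (p₂ : ℂ) * hb₂ + hmid
end
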